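/- Let H be a weak Hopf algebra with antipode S and R = Im(Π^L). Then e = S(1_{(1)}) ⊗ 1_{(2)} is a separability idempotent for R: for all g ∈ H, Π^L(g) S(1_{(1)}) ⊗ 1_{(2)} = S(1_{(1)}) ⊗ 1_{(2)} Π^L(g), and moreover R is a subalgebra of H. -/
import Mathlib

open TensorProduct LinearMap MulOpposite

noncomputable section
namespace DK

variable (k : Type*) [CommRing k] (H : Type*) [Ring H] [Algebra k H]

/-- Given `u = Σ xᵢ ⊗ bᵢ ∈ H ⊗ B` and `ε : H → k`, the linear map `g ↦ Σ ε(xᵢ * g) • bᵢ`. -/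
def coPi (B : Type*) [AddCommGroup B] [Module k B] (ε : H →ₗ[k] k) (u : H ⊗[k] B) :
    H →ₗ[k] B :=
  ((TensorProduct.lid k B).toLinearMap
      ∘ₗ LinearMap.rTensor B (ε ∘ₗ LinearMap.mul' k H)
      ∘ₗ (TensorProduct.assoc k H H B).symm.toLinearMap
      ∘ₗ LinearMap.lTensor H (TensorProduct.comm k B H).toLinearMap
      ∘ₗ (TensorProduct.assoc k H B H).toLinearMap)
    ∘ₗ TensorProduct.mk k (H ⊗[k] B) H u

/-- Given `u = Σ bᵢ ⊗ xᵢ ∈ B ⊗ H` and `ε : H → k`, the linear map `g ↦ Σ ε(g * xᵢ) • bᵢ`. -/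
def coPiR (B : Type*) [AddCommGroup B] [Module k B] (ε : H →ₗ[k] k) (u : B ⊗[k] H) :
    H →ₗ[k] B :=
  ((TensorProduct.rid k B).toLinearMap
      ∘ₗ LinearMap.lTensor B (ε ∘ₗ LinearMap.mul' k H ∘ₗ (TensorProduct.comm k H H).toLinearMap)
      ∘ₗ (TensorProduct.assoc k B H H).toLinearMap)
    ∘ₗ TensorProduct.mk k (B ⊗[k] H) H u

variable (Δ : H →ₗ[k] H ⊗[k] H) (ε : H →ₗ[k] k)

/-- `Π^L(g) = ε(1₍₁₎ g) • 1₍₂₎`. -/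
def PiL : H →ₗ[k] H := coPi k H H ε (Δ 1)

/-- `Π^R(g) = ε(g 1₍₂₎) • 1₍₁₎`. -/
def PiR : H →ₗ[k] H := coPiR k H H ε (Δ 1)

/-- the map `h₍₁₎ ε(g h₍₂₎)` as a function of the input of `Δ`, i.e.
`u = Σ aᵢ ⊗ bᵢ ↦ Σ ε(g bᵢ) • aᵢ`. -/
def PiRmap (g : H) : H ⊗[k] H →ₗ[k] H :=
  (TensorProduct.rid k H).toLinearMap ∘ₗ LinearMap.lTensor H (ε ∘ₗ LinearMap.mulLeft k g)

/-- `(a ⊗ b) ↦ ε(x a) * ε(b z)`. -/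
def eps2 (x z : H) : H ⊗[k] H →ₗ[k] k :=
  (TensorProduct.lid k k).toLinearMap
    ∘ₗ TensorProduct.map (ε ∘ₗ LinearMap.mulLeft k x) (ε ∘ₗ LinearMap.mulRight k z)

/-- `(a ⊗ b) ↦ ε(a z) * ε(x b)`. -/
def eps2' (x z : H) : H ⊗[k] H →ₗ[k] k :=
  (TensorProduct.lid k k).toLinearMap
    ∘ₗ TensorProduct.map (ε ∘ₗ LinearMap.mulRight k z) (ε ∘ₗ LinearMap.mulLeft k x)

/-- The weak bialgebra axioms for `(H, ·, Δ, ε)`: `Δ` is a multiplicative coassociative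
counital coproduct, the weak counit axiom
`ε(xyz) = ε(x y₍₁₎) ε(y₍₂₎ z) = ε(x y₍₂₎) ε(y₍₁₎ z)` holds, and the weak unit axiom
`(Δ ⊗ id)Δ(1) = (Δ(1) ⊗ 1)(1 ⊗ Δ(1)) = (1 ⊗ Δ(1))(Δ(1) ⊗ 1)` holds. -/
def IsWeakBialgebra : Prop :=
  (∀ x y : H, Δ (x * y) = Δ x * Δ y) ∧
  (∀ h : H, (TensorProduct.assoc k H H H) ((LinearMap.rTensor H Δ) (Δ h)) =
      (LinearMap.lTensor H Δ) (Δ h)) ∧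
  (∀ h : H, (TensorProduct.lid k H) ((LinearMap.rTensor H ε) (Δ h)) = h) ∧
  (∀ h : H, (TensorProduct.rid k H) ((LinearMap.lTensor H ε) (Δ h)) = h) ∧
  (∀ x y z : H, ε (x * y * z) = eps2 k H ε x z (Δ y)) ∧
  (∀ x y z : H, ε (x * y * z) = eps2' k H ε x z (Δ y)) ∧
  ((LinearMap.lTensor H Δ) (Δ 1) =
      (TensorProduct.assoc k H H H) ((Δ 1) ⊗ₜ[k] (1 : H)) * ((1 : H) ⊗ₜ[k] (Δ 1))) ∧
  ((LinearMap.lTensor H Δ) (Δ 1) =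
      ((1 : H) ⊗ₜ[k] (Δ 1)) * (TensorProduct.assoc k H H H) ((Δ 1) ⊗ₜ[k] (1 : H)))

variable (S : H →ₗ[k] H)

/-- The weak Hopf algebra axioms: `H` is a weak bialgebra with antipode `S` satisfying
`h₍₁₎ S(h₍₂₎) = Π^L(h)`, `S(h₍₁₎) h₍₂₎ = Π^R(h)` and `S(h₍₁₎) h₍₂₎ S(h₍₃₎) = S(h)`. -/
def IsWeakHopf : Prop :=
  IsWeakBialgebra k H Δ ε ∧
  (∀ h : H, LinearMap.mul' k H ((LinearMap.lTensor H S) (Δ h)) = PiL k H Δ ε h) ∧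
  (∀ h : H, LinearMap.mul' k H ((LinearMap.rTensor H S) (Δ h)) = PiR k H Δ ε h) ∧
  (∀ h : H,
    (LinearMap.mul' k H ∘ₗ LinearMap.lTensor H (LinearMap.mul' k H))
        ((TensorProduct.map S (TensorProduct.map LinearMap.id S))
          ((LinearMap.lTensor H Δ) (Δ h))) = S h)

end DK
end


noncomputable section Aux
set_option synthInstance.maxHeartbeats 1000000
set_option maxHeartbeats 1000000
namespace WH
variable {k : Type*} [CommRing k] {H : Type*} [Ring H] [Algebra k H]
variable (Δ : H →ₗ[k] H ⊗[k] H) (ε : H →ₗ[k] k) (S : H →ₗ[k] H)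

@[simp] lemma coPi_tmul (a b g : H) :
    DK.coPi k H H ε (a ⊗ₜ[k] b) g = ε (a * g) • b := by
  simp [DK.coPi]

@[simp] lemma coPiR_tmul (a b g : H) :
    DK.coPiR k H H ε (a ⊗ₜ[k] b) g = ε (g * b) • a := by
  simp [DK.coPiR]

@[simp] lemma eps2_tmul (x z a b : H) :
    DK.eps2 k H ε x z (a ⊗ₜ[k] b) = ε (x*a) * ε (b*z) := by
  simp [DK.eps2, smul_eq_mul]

@[simp] lemma eps2'_tmul (x z a b : H) :
    DK.eps2' k H ε x z (a ⊗ₜ[k] b) = ε (a*z) * ε (x*b) := by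
  simp [DK.eps2', smul_eq_mul]



@[simp] lemma coPi_zero (g : H) : DK.coPi k H H ε 0 g = 0 := by
  simp [DK.coPi]

@[simp] lemma coPi_add (x y : H ⊗[k] H) (g : H) :
    DK.coPi k H H ε (x + y) g = DK.coPi k H H ε x g + DK.coPi k H H ε y g := by
  simp [DK.coPi, add_tmul]

@[simp] lemma coPi_zero' : DK.coPi k H H ε (0 : H ⊗[k] H) = 0 :=
  LinearMap.ext fun g => coPi_zero ε g

lemma coPi_add' (x y : H ⊗[k] H) :
    DK.coPi k H H ε (x + y) = DK.coPi k H H ε x + DK.coPi k H H ε y :=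
  LinearMap.ext fun g => coPi_add ε x y g

lemma PiL_def (g : H) : DK.PiL k H Δ ε g = DK.coPi k H H ε (Δ 1) g := rfl

lemma hm1 (hmul : ∀ x y : H, Δ (x * y) = Δ x * Δ y) (h : H) : Δ 1 * Δ h = Δ h := by
  rw [← hmul, one_mul]

lemma hm2 (hmul : ∀ x y : H, Δ (x * y) = Δ x * Δ y) (h : H) : Δ h * Δ 1 = Δ h := by
  rw [← hmul, mul_one]

/-- the contraction map `a ⊗ w ↦ ε(a g) • w` -/
def LMg (g : H) : H ⊗[k] (H ⊗[k] H) →ₗ[k] H ⊗[k] H :=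
  TensorProduct.lift ((LinearMap.lsmul k (H ⊗[k] H)) ∘ₗ ε ∘ₗ LinearMap.mulRight k g)

@[simp] lemma LMg_tmul (g a : H) (w : H ⊗[k] H) :
    LMg ε g (a ⊗ₜ[k] w) = ε (a * g) • w := by
  simp [LMg]

lemma L3a (hw7 : (LinearMap.lTensor H Δ) (Δ 1) =
      (TensorProduct.assoc k H H H) ((Δ 1) ⊗ₜ[k] (1 : H)) * ((1 : H) ⊗ₜ[k] (Δ 1)))
    (g : H) :
    Δ (DK.PiL k H Δ ε g) = (DK.PiL k H Δ ε g ⊗ₜ[k] (1:H)) * Δ 1 := by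
  have step1 : ∀ u : H ⊗[k] H, Δ (DK.coPi k H H ε u g) = LMg ε g (LinearMap.lTensor H Δ u) := by
    intro u
    induction u using TensorProduct.induction_on with
    | zero => simp
    | tmul a b => simp
    | add x y hx hy => simp [map_add, hx, hy, coPi_add]
  have step2 : ∀ u v : H ⊗[k] H,
      LMg ε g ((TensorProduct.assoc k H H H) (u ⊗ₜ[k] (1:H)) * ((1 : H) ⊗ₜ[k] v)) =
        ((DK.coPi k H H ε u g) ⊗ₜ[k] (1:H)) * v := by
    intro u v
    induction u using TensorProduct.induction_on with
    | zero => simp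
    | tmul a b =>
      induction v using TensorProduct.induction_on with
      | zero => simp
      | tmul c d =>
        simp [Algebra.TensorProduct.tmul_mul_tmul, smul_mul_assoc, smul_tmul']
      | add x y hx hy => rw [tmul_add, mul_add, map_add, hx, hy, ← mul_add]
    | add x y hx hy => simp [add_tmul, add_mul, hx, hy, add_smul]
  rw [PiL_def, step1, hw7, step2]

lemma L3b (hw8 : (LinearMap.lTensor H Δ) (Δ 1) =
      ((1 : H) ⊗ₜ[k] (Δ 1)) * (TensorProduct.assoc k H H H) ((Δ 1) ⊗ₜ[k] (1 : H)))
    (g : H) :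
    Δ (DK.PiL k H Δ ε g) = Δ 1 * (DK.PiL k H Δ ε g ⊗ₜ[k] (1:H)) := by
  have step1 : ∀ u : H ⊗[k] H, Δ (DK.coPi k H H ε u g) = LMg ε g (LinearMap.lTensor H Δ u) := by
    intro u
    induction u using TensorProduct.induction_on with
    | zero => simp
    | tmul a b => simp
    | add x y hx hy => simp [map_add, hx, hy, coPi_add]
  have step2 : ∀ u v : H ⊗[k] H,
      LMg ε g (((1 : H) ⊗ₜ[k] v) * (TensorProduct.assoc k H H H) (u ⊗ₜ[k] (1:H))) =
        v * ((DK.coPi k H H ε u g) ⊗ₜ[k] (1:H)) := by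
    intro u v
    induction u using TensorProduct.induction_on with
    | zero => simp
    | tmul a b =>
      induction v using TensorProduct.induction_on with
      | zero => simp
      | tmul c d =>
        simp [Algebra.TensorProduct.tmul_mul_tmul, mul_smul_comm, smul_tmul']
      | add x y hx hy => rw [tmul_add, add_mul, map_add, hx, hy, ← add_mul]
    | add x y hx hy => simp [add_tmul, mul_add, hx, hy, add_smul]
  rw [PiL_def, step1, hw8, step2]


lemma Lcomm (hw7 : (LinearMap.lTensor H Δ) (Δ 1) =
      (TensorProduct.assoc k H H H) ((Δ 1) ⊗ₜ[k] (1 : H)) * ((1 : H) ⊗ₜ[k] (Δ 1)))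
    (hw8 : (LinearMap.lTensor H Δ) (Δ 1) =
      ((1 : H) ⊗ₜ[k] (Δ 1)) * (TensorProduct.assoc k H H H) ((Δ 1) ⊗ₜ[k] (1 : H)))
    (g : H) :
    (DK.PiL k H Δ ε g ⊗ₜ[k] (1:H)) * Δ 1 = Δ 1 * (DK.PiL k H Δ ε g ⊗ₜ[k] (1:H)) :=
  (L3a Δ ε hw7 g).symm.trans (L3b Δ ε hw8 g)

lemma M1 (z : H) (u : H ⊗[k] H) :
    LinearMap.mul' k H (LinearMap.lTensor H S ((z ⊗ₜ[k] (1:H)) * u)) =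
      z * LinearMap.mul' k H (LinearMap.lTensor H S u) := by
  induction u using TensorProduct.induction_on with
  | zero => simp
  | tmul a b => simp [Algebra.TensorProduct.tmul_mul_tmul, mul_assoc]
  | add x y hx hy => simp [mul_add, hx, hy]

lemma L11 (hmul : ∀ x y : H, Δ (x * y) = Δ x * Δ y)
    (hw7 : (LinearMap.lTensor H Δ) (Δ 1) =
      (TensorProduct.assoc k H H H) ((Δ 1) ⊗ₜ[k] (1 : H)) * ((1 : H) ⊗ₜ[k] (Δ 1)))
    (hA1 : ∀ h : H, LinearMap.mul' k H ((LinearMap.lTensor H S) (Δ h)) = DK.PiL k H Δ ε h)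
    (g h : H) :
    DK.PiL k H Δ ε (DK.PiL k H Δ ε g * h) = DK.PiL k H Δ ε g * DK.PiL k H Δ ε h := by
  have hd : Δ (DK.PiL k H Δ ε g * h) = (DK.PiL k H Δ ε g ⊗ₜ[k] (1:H)) * Δ h := by
    rw [hmul, L3a Δ ε hw7 g, mul_assoc, hm1 Δ hmul]
  rw [← hA1, hd, M1, hA1]

lemma PiL_one (hcl : ∀ h : H, (TensorProduct.lid k H) ((LinearMap.rTensor H ε) (Δ h)) = h) :
    DK.PiL k H Δ ε 1 = 1 := by
  have : ∀ u : H ⊗[k] H, DK.coPi k H H ε u 1 = (TensorProduct.lid k H) ((LinearMap.rTensor H ε) u) := by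
    intro u
    induction u using TensorProduct.induction_on with
    | zero => simp
    | tmul a b => simp
    | add x y hx hy => simp [map_add, hx, hy]
  rw [PiL_def, this, hcl]

lemma Leps (hwc2 : ∀ x y z : H, ε (x * y * z) = DK.eps2' k H ε x z (Δ y))
    (A g : H) : ε (A * DK.PiL k H Δ ε g) = ε (A * g) := by
  have h2 : ∀ u : H ⊗[k] H, ε (A * DK.coPi k H H ε u g) = DK.eps2' k H ε A g u := by
    intro u
    induction u using TensorProduct.induction_on with
    | zero => simp
    | tmul a b => simp [mul_smul_comm, mul_comm]
    | add x y hx hy => simp [mul_add, hx, hy]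
  have := hwc2 A 1 g
  rw [mul_one] at this
  rw [PiL_def, h2, ← this]

lemma vi (hwc2 : ∀ x y z : H, ε (x * y * z) = DK.eps2' k H ε x z (Δ y))
    (h g : H) :
    DK.PiL k H Δ ε (h * DK.PiL k H Δ ε g) = DK.PiL k H Δ ε (h * g) := by
  rw [PiL_def, PiL_def]
  have : ∀ u : H ⊗[k] H,
      DK.coPi k H H ε u (h * DK.PiL k H Δ ε g) = DK.coPi k H H ε u (h * g) := by
    intro u
    induction u using TensorProduct.induction_on with
    | zero => simp
    | tmul a b => rw [coPi_tmul, coPi_tmul, ← mul_assoc, ← mul_assoc, Leps Δ ε hwc2]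
    | add x y hx hy => simp [coPi_add, hx, hy]
  exact this (Δ 1)

lemma L19 (hmul : ∀ x y : H, Δ (x * y) = Δ x * Δ y)
    (hw7 : (LinearMap.lTensor H Δ) (Δ 1) =
      (TensorProduct.assoc k H H H) ((Δ 1) ⊗ₜ[k] (1 : H)) * ((1 : H) ⊗ₜ[k] (Δ 1)))
    (hw8 : (LinearMap.lTensor H Δ) (Δ 1) =
      ((1 : H) ⊗ₜ[k] (Δ 1)) * (TensorProduct.assoc k H H H) ((Δ 1) ⊗ₜ[k] (1 : H)))
    (hA1 : ∀ h : H, LinearMap.mul' k H ((LinearMap.lTensor H S) (Δ h)) = DK.PiL k H Δ ε h)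
    (h g : H) :
    LinearMap.mul' k H (LinearMap.lTensor H S (Δ h * (DK.PiL k H Δ ε g ⊗ₜ[k] (1:H)))) =
      DK.PiL k H Δ ε (h * DK.PiL k H Δ ε g) := by
  have hd : Δ (h * DK.PiL k H Δ ε g) = Δ h * (DK.PiL k H Δ ε g ⊗ₜ[k] (1:H)) := by
    rw [hmul, L3a Δ ε hw7 g, Lcomm Δ ε hw7 hw8 g, ← mul_assoc, hm2 Δ hmul]
  rw [← hA1 (h * DK.PiL k H Δ ε g), hd]

lemma coPiR_zero (g : H) : DK.coPiR k H H ε 0 g = 0 := by simp [DK.coPiR]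

lemma coPiR_add (x y : H ⊗[k] H) (g : H) :
    DK.coPiR k H H ε (x + y) g = DK.coPiR k H H ε x g + DK.coPiR k H H ε y g := by
  simp [DK.coPiR, add_tmul]

lemma L28 (hw7 : (LinearMap.lTensor H Δ) (Δ 1) =
      (TensorProduct.assoc k H H H) ((Δ 1) ⊗ₜ[k] (1 : H)) * ((1 : H) ⊗ₜ[k] (Δ 1)))
    (hw8 : (LinearMap.lTensor H Δ) (Δ 1) =
      ((1 : H) ⊗ₜ[k] (Δ 1)) * (TensorProduct.assoc k H H H) ((Δ 1) ⊗ₜ[k] (1 : H)))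
    (g a : H) :
    DK.PiL k H Δ ε g * DK.PiR k H Δ ε a = DK.PiR k H Δ ε a * DK.PiL k H Δ ε g := by
  have h1 : ∀ u : H ⊗[k] H, ∀ x : H,
      x * DK.coPiR k H H ε u a = DK.coPiR k H H ε ((x ⊗ₜ[k] (1:H)) * u) a := by
    intro u x
    induction u using TensorProduct.induction_on with
    | zero => simp [coPiR_zero]
    | tmul c d => simp [Algebra.TensorProduct.tmul_mul_tmul, mul_smul_comm]
    | add p q hp hq => simp [mul_add, coPiR_add, hp, hq]
  have h2 : ∀ u : H ⊗[k] H, ∀ x : H,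
      DK.coPiR k H H ε u a * x = DK.coPiR k H H ε (u * (x ⊗ₜ[k] (1:H))) a := by
    intro u x
    induction u using TensorProduct.induction_on with
    | zero => simp [coPiR_zero]
    | tmul c d => simp [Algebra.TensorProduct.tmul_mul_tmul, smul_mul_assoc]
    | add p q hp hq => simp [add_mul, coPiR_add, hp, hq]
  show DK.PiL k H Δ ε g * DK.coPiR k H H ε (Δ 1) a = DK.coPiR k H H ε (Δ 1) a * DK.PiL k H Δ ε g
  rw [h1, h2, Lcomm Δ ε hw7 hw8 g]


lemma L22 (hA1 : ∀ h : H, LinearMap.mul' k H ((LinearMap.lTensor H S) (Δ h)) = DK.PiL k H Δ ε h)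
    (hA3 : ∀ h : H,
      (LinearMap.mul' k H ∘ₗ LinearMap.lTensor H (LinearMap.mul' k H))
        ((TensorProduct.map S (TensorProduct.map LinearMap.id S))
          ((LinearMap.lTensor H Δ) (Δ h))) = S h)
    (h : H) :
    LinearMap.mul' k H (TensorProduct.map S (DK.PiL k H Δ ε) (Δ h)) = S h := by
  have key : ∀ u : H ⊗[k] H,
      (LinearMap.mul' k H ∘ₗ LinearMap.lTensor H (LinearMap.mul' k H))
        ((TensorProduct.map S (TensorProduct.map LinearMap.id S))
          ((LinearMap.lTensor H Δ) u)) =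
      LinearMap.mul' k H (TensorProduct.map S (DK.PiL k H Δ ε) u) := by
    intro u
    induction u using TensorProduct.induction_on with
    | zero => simp
    | tmul a b =>
      have : TensorProduct.map (LinearMap.id (R := k) (M := H)) S (Δ b)
          = LinearMap.lTensor H S (Δ b) := rfl
      simp [this, hA1 b]
    | add x y hx hy => simp only [map_add, hx, hy]
  rw [← key, hA3]

lemma L22' (hco : ∀ h : H, (TensorProduct.assoc k H H H) ((LinearMap.rTensor H Δ) (Δ h)) =
      (LinearMap.lTensor H Δ) (Δ h))
    (hA2 : ∀ h : H, LinearMap.mul' k H ((LinearMap.rTensor H S) (Δ h)) = DK.PiR k H Δ ε h)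
    (hA3 : ∀ h : H,
      (LinearMap.mul' k H ∘ₗ LinearMap.lTensor H (LinearMap.mul' k H))
        ((TensorProduct.map S (TensorProduct.map LinearMap.id S))
          ((LinearMap.lTensor H Δ) (Δ h))) = S h)
    (h : H) :
    LinearMap.mul' k H (TensorProduct.map (DK.PiR k H Δ ε) S (Δ h)) = S h := by
  have key : ∀ u : (H ⊗[k] H) ⊗[k] H,
      (LinearMap.mul' k H ∘ₗ LinearMap.lTensor H (LinearMap.mul' k H))
        ((TensorProduct.map S (TensorProduct.map LinearMap.id S))
          ((TensorProduct.assoc k H H H) u)) =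
      LinearMap.mul' k H (TensorProduct.map
        (LinearMap.mul' k H ∘ₗ LinearMap.rTensor H S) S u) := by
    intro u
    induction u using TensorProduct.induction_on with
    | zero => rw [LinearEquiv.map_zero]; simp
    | tmul w c =>
      induction w using TensorProduct.induction_on with
      | zero => rw [zero_tmul, LinearEquiv.map_zero]; simp
      | tmul a b => simp [mul_assoc]
      | add x y hx hy => simp only [add_tmul, map_add, hx, hy]
    | add x y hx hy => simp only [map_add, hx, hy]
  have key2 : ∀ u : H ⊗[k] H,
      LinearMap.mul' k H (TensorProduct.map
        (LinearMap.mul' k H ∘ₗ LinearMap.rTensor H S) S (LinearMap.rTensor H Δ u)) =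
      LinearMap.mul' k H (TensorProduct.map (DK.PiR k H Δ ε) S u) := by
    intro u
    induction u using TensorProduct.induction_on with
    | zero => simp
    | tmul a b => simp [hA2 a]
    | add x y hx hy => simp only [map_add, hx, hy]
  rw [← key2, ← key, hco, hA3]

/-- `(id ⊗ Π^L)(Δ 1) = Δ 1`. -/
lemma L24' (hcl : ∀ h : H, (TensorProduct.lid k H) ((LinearMap.rTensor H ε) (Δ h)) = h)
    (hw8 : (LinearMap.lTensor H Δ) (Δ 1) =
      ((1 : H) ⊗ₜ[k] (Δ 1)) * (TensorProduct.assoc k H H H) ((Δ 1) ⊗ₜ[k] (1 : H))) :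
    LinearMap.lTensor H (DK.PiL k H Δ ε) (Δ 1) = Δ 1 := by
  set Ξ : H ⊗[k] (H ⊗[k] H) →ₗ[k] H ⊗[k] H :=
    LinearMap.lTensor H ((TensorProduct.lid k H).toLinearMap ∘ₗ LinearMap.rTensor H ε) with hΞ
  have h1 : ∀ u : H ⊗[k] H, Ξ (LinearMap.lTensor H Δ u) = u := by
    intro u
    induction u using TensorProduct.induction_on with
    | zero => simp
    | tmul a b => simp [hΞ, hcl b]
    | add x y hx hy => simp only [map_add, hx, hy]
  have h2 : ∀ u v : H ⊗[k] H,
      Ξ (((1 : H) ⊗ₜ[k] v) * (TensorProduct.assoc k H H H) (u ⊗ₜ[k] (1:H))) =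
      LinearMap.lTensor H (DK.coPi k H H ε v) u := by
    intro u v
    induction u using TensorProduct.induction_on with
    | zero => simp
    | tmul a b =>
      induction v using TensorProduct.induction_on with
      | zero => simp
      | tmul c d => simp [hΞ, Algebra.TensorProduct.tmul_mul_tmul, tmul_smul]
      | add x y hx hy =>
        rw [tmul_add, add_mul, map_add, hx, hy, coPi_add', LinearMap.lTensor_add]
        simp
    | add x y hx hy => simp only [add_tmul, mul_add, map_add, hx, hy]
  have := h1 (Δ 1)
  rw [hw8, h2] at this
  exact this

lemma PiR_one (hcr : ∀ h : H, (TensorProduct.rid k H) ((LinearMap.lTensor H ε) (Δ h)) = h) :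
    DK.PiR k H Δ ε 1 = 1 := by
  have : ∀ u : H ⊗[k] H, DK.coPiR k H H ε u 1 = (TensorProduct.rid k H) ((LinearMap.lTensor H ε) u) := by
    intro u
    induction u using TensorProduct.induction_on with
    | zero => simp [coPiR_zero]
    | tmul a b => simp
    | add x y hx hy => simp [map_add, coPiR_add, hx, hy]
  show DK.coPiR k H H ε (Δ 1) 1 = 1
  rw [this, hcr]

lemma E7 (hcl : ∀ h : H, (TensorProduct.lid k H) ((LinearMap.rTensor H ε) (Δ h)) = h)
    (hcr : ∀ h : H, (TensorProduct.rid k H) ((LinearMap.lTensor H ε) (Δ h)) = h)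
    (hw8 : (LinearMap.lTensor H Δ) (Δ 1) =
      ((1 : H) ⊗ₜ[k] (Δ 1)) * (TensorProduct.assoc k H H H) ((Δ 1) ⊗ₜ[k] (1 : H)))
    (hA1 : ∀ h : H, LinearMap.mul' k H ((LinearMap.lTensor H S) (Δ h)) = DK.PiL k H Δ ε h)
    (hA2 : ∀ h : H, LinearMap.mul' k H ((LinearMap.rTensor H S) (Δ h)) = DK.PiR k H Δ ε h)
    (hA3 : ∀ h : H,
      (LinearMap.mul' k H ∘ₗ LinearMap.lTensor H (LinearMap.mul' k H))
        ((TensorProduct.map S (TensorProduct.map LinearMap.id S))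
          ((LinearMap.lTensor H Δ) (Δ h))) = S h) :
    S 1 = 1 := by
  have h1 : TensorProduct.map S (DK.PiL k H Δ ε) (Δ 1)
      = LinearMap.rTensor H S (LinearMap.lTensor H (DK.PiL k H Δ ε) (Δ 1)) := by
    have : ∀ u : H ⊗[k] H, TensorProduct.map S (DK.PiL k H Δ ε) u
        = LinearMap.rTensor H S (LinearMap.lTensor H (DK.PiL k H Δ ε) u) := by
      intro u
      induction u using TensorProduct.induction_on with
      | zero => simp
      | tmul a b => simp
      | add x y hx hy => simp only [map_add, hx, hy]
    exact this (Δ 1)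
  rw [← L22 Δ ε S hA1 hA3 1, h1, L24' Δ ε hcl hw8, hA2 1, PiR_one Δ ε hcr]

lemma M2 (z : H) (v : H ⊗[k] H) :
    LinearMap.mul' k H (LinearMap.rTensor H S (v * ((1:H) ⊗ₜ[k] z))) =
      LinearMap.mul' k H (LinearMap.rTensor H S v) * z := by
  induction v using TensorProduct.induction_on with
  | zero => simp
  | tmul a b => simp [Algebra.TensorProduct.tmul_mul_tmul, mul_assoc]
  | add x y hx hy => simp [add_mul, hx, hy]


lemma E9 (hmul : ∀ x y : H, Δ (x * y) = Δ x * Δ y)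
    (hco : ∀ h : H, (TensorProduct.assoc k H H H) ((LinearMap.rTensor H Δ) (Δ h)) =
      (LinearMap.lTensor H Δ) (Δ h))
    (hcl : ∀ h : H, (TensorProduct.lid k H) ((LinearMap.rTensor H ε) (Δ h)) = h)
    (hcr : ∀ h : H, (TensorProduct.rid k H) ((LinearMap.lTensor H ε) (Δ h)) = h)
    (hw7 : (LinearMap.lTensor H Δ) (Δ 1) =
      (TensorProduct.assoc k H H H) ((Δ 1) ⊗ₜ[k] (1 : H)) * ((1 : H) ⊗ₜ[k] (Δ 1)))
    (hw8 : (LinearMap.lTensor H Δ) (Δ 1) =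
      ((1 : H) ⊗ₜ[k] (Δ 1)) * (TensorProduct.assoc k H H H) ((Δ 1) ⊗ₜ[k] (1 : H)))
    (hA1 : ∀ h : H, LinearMap.mul' k H ((LinearMap.lTensor H S) (Δ h)) = DK.PiL k H Δ ε h)
    (hA2 : ∀ h : H, LinearMap.mul' k H ((LinearMap.rTensor H S) (Δ h)) = DK.PiR k H Δ ε h)
    (hA3 : ∀ h : H,
      (LinearMap.mul' k H ∘ₗ LinearMap.lTensor H (LinearMap.mul' k H))
        ((TensorProduct.map S (TensorProduct.map LinearMap.id S))
          ((LinearMap.lTensor H Δ) (Δ h))) = S h)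
    (g : H) :
    LinearMap.mul' k H (TensorProduct.map S
      (DK.PiL k H Δ ε ∘ₗ LinearMap.mulRight k (DK.PiL k H Δ ε g)) (Δ 1)) =
      DK.PiL k H Δ ε g := by
  set z := DK.PiL k H Δ ε g with hz
  set F : H ⊗[k] H →ₗ[k] H :=
    LinearMap.mul' k H ∘ₗ LinearMap.lTensor H S ∘ₗ
      LinearMap.mulRight k (z ⊗ₜ[k] (1:H)) with hF
  have h1 : DK.PiL k H Δ ε ∘ₗ LinearMap.mulRight k z = F ∘ₗ Δ := by
    apply LinearMap.ext
    intro h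
    simp only [LinearMap.comp_apply, LinearMap.mulRight_apply, hF]
    exact (L19 Δ ε S hmul hw7 hw8 hA1 h g).symm
  have h2 : TensorProduct.map S (DK.PiL k H Δ ε ∘ₗ LinearMap.mulRight k z)
      = TensorProduct.map S F ∘ₗ LinearMap.lTensor H Δ := by
    rw [h1]
    have : TensorProduct.map S (F ∘ₗ Δ) = TensorProduct.map (S ∘ₗ LinearMap.id) (F ∘ₗ Δ) := by
      rw [LinearMap.comp_id]
    rw [this, TensorProduct.map_comp]
    rfl
  rw [h2, LinearMap.comp_apply, ← hco 1]
  have E9sub : ∀ (V : H ⊗[k] H) (b : H),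
      LinearMap.mul' k H (TensorProduct.map S F ((TensorProduct.assoc k H H H) (V ⊗ₜ[k] b))) =
      LinearMap.mul' k H (LinearMap.rTensor H S (V * ((1:H) ⊗ₜ[k] z))) * S b := by
    intro V b
    induction V using TensorProduct.induction_on with
    | zero => rw [zero_tmul, LinearEquiv.map_zero]; simp
    | tmul A B =>
      simp [hF, Algebra.TensorProduct.tmul_mul_tmul, mul_assoc]
    | add x y hx hy => rw [add_tmul, LinearEquiv.map_add]; simp only [map_add, add_mul, hx, hy, add_tmul]
  have main : ∀ w : H ⊗[k] H,
      LinearMap.mul' k H (TensorProduct.map S F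
        ((TensorProduct.assoc k H H H) (LinearMap.rTensor H Δ w))) =
      z * LinearMap.mul' k H (TensorProduct.map (DK.PiR k H Δ ε) S w) := by
    intro w
    induction w using TensorProduct.induction_on with
    | zero => simp
    | tmul a b =>
      rw [LinearMap.rTensor_tmul, E9sub, M2, hA2 a, ← L28 Δ ε hw7 hw8 g a, ← hz, mul_assoc]
      simp
    | add x y hx hy => simp only [map_add, hx, hy, mul_add]
  rw [main (Δ 1), L22' Δ ε S hco hA2 hA3 1,
    E7 Δ ε S hcl hcr hw8 hA1 hA2 hA3, mul_one]


lemma c1 (hmul : ∀ x y : H, Δ (x * y) = Δ x * Δ y)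
    (hco : ∀ h : H, (TensorProduct.assoc k H H H) ((LinearMap.rTensor H Δ) (Δ h)) =
      (LinearMap.lTensor H Δ) (Δ h))
    (hcl : ∀ h : H, (TensorProduct.lid k H) ((LinearMap.rTensor H ε) (Δ h)) = h)
    (hcr : ∀ h : H, (TensorProduct.rid k H) ((LinearMap.lTensor H ε) (Δ h)) = h)
    (hwc2 : ∀ x y z : H, ε (x * y * z) = DK.eps2' k H ε x z (Δ y))
    (hw7 : (LinearMap.lTensor H Δ) (Δ 1) =
      (TensorProduct.assoc k H H H) ((Δ 1) ⊗ₜ[k] (1 : H)) * ((1 : H) ⊗ₜ[k] (Δ 1)))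
    (hw8 : (LinearMap.lTensor H Δ) (Δ 1) =
      ((1 : H) ⊗ₜ[k] (Δ 1)) * (TensorProduct.assoc k H H H) ((Δ 1) ⊗ₜ[k] (1 : H)))
    (hA1 : ∀ h : H, LinearMap.mul' k H ((LinearMap.lTensor H S) (Δ h)) = DK.PiL k H Δ ε h)
    (hA2 : ∀ h : H, LinearMap.mul' k H ((LinearMap.rTensor H S) (Δ h)) = DK.PiR k H Δ ε h)
    (hA3 : ∀ h : H,
      (LinearMap.mul' k H ∘ₗ LinearMap.lTensor H (LinearMap.mul' k H))
        ((TensorProduct.map S (TensorProduct.map LinearMap.id S))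
          ((LinearMap.lTensor H Δ) (Δ h))) = S h) :
    LinearMap.rTensor H (DK.PiL k H Δ ε) (Δ 1) = LinearMap.rTensor H S (Δ 1) := by
  set Fm : H ⊗[k] H →ₗ[k] H :=
    LinearMap.mul' k H ∘ₗ TensorProduct.map S (DK.PiL k H Δ ε) with hFm
  have i : ∀ u : H ⊗[k] H,
      LinearMap.rTensor H S u = LinearMap.rTensor H Fm (LinearMap.rTensor H Δ u) := by
    intro u
    induction u using TensorProduct.induction_on with
    | zero => simp
    | tmul a b =>
      rw [LinearMap.rTensor_tmul, LinearMap.rTensor_tmul, LinearMap.rTensor_tmul, hFm,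
        LinearMap.comp_apply, L22 Δ ε S hA1 hA3 a]
    | add x y hx hy => simp only [map_add, hx, hy]
  have sub : ∀ (u : H ⊗[k] H) (c d : H),
      LinearMap.rTensor H Fm ((TensorProduct.assoc k H H H).symm
        ((TensorProduct.assoc k H H H) (u ⊗ₜ[k] (1:H)) * ((1:H) ⊗ₜ[k] (c ⊗ₜ[k] d)))) =
      (LinearMap.mul' k H (TensorProduct.map S
        (DK.PiL k H Δ ε ∘ₗ LinearMap.mulRight k (DK.PiL k H Δ ε c)) (u))) ⊗ₜ[k] d := by
    intro u c d
    induction u using TensorProduct.induction_on with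
    | zero => rw [zero_tmul, LinearEquiv.map_zero]; simp
    | tmul a b =>
      rw [TensorProduct.assoc_tmul]
      simp only [Algebra.TensorProduct.tmul_mul_tmul, mul_one, one_mul]
      rw [TensorProduct.assoc_symm_tmul, LinearMap.rTensor_tmul]
      simp only [hFm, LinearMap.comp_apply, TensorProduct.map_tmul,
        LinearMap.mulRight_apply, LinearMap.mul'_apply]
      rw [vi Δ ε hwc2 b c]
    | add x y hx hy =>
      rw [add_tmul, LinearEquiv.map_add, add_mul, LinearEquiv.map_add, map_add, hx, hy,
        map_add, map_add, add_tmul]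
  have iv : ∀ v : H ⊗[k] H,
      LinearMap.rTensor H Fm ((TensorProduct.assoc k H H H).symm
        ((TensorProduct.assoc k H H H) ((Δ 1) ⊗ₜ[k] (1:H)) * ((1:H) ⊗ₜ[k] v))) =
      LinearMap.rTensor H (DK.PiL k H Δ ε) v := by
    intro v
    induction v using TensorProduct.induction_on with
    | zero => simp
    | tmul c d =>
      rw [sub (Δ 1) c d,
        E9 Δ ε S hmul hco hcl hcr hw7 hw8 hA1 hA2 hA3 c, LinearMap.rTensor_tmul]
    | add x y hx hy =>
      rw [tmul_add, mul_add, LinearEquiv.map_add, map_add, hx, hy, map_add]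
  have chain : LinearMap.rTensor H S (Δ 1) = LinearMap.rTensor H (DK.PiL k H Δ ε) (Δ 1) := by
    rw [i (Δ 1)]
    have : LinearMap.rTensor H Δ (Δ 1)
        = (TensorProduct.assoc k H H H).symm (LinearMap.lTensor H Δ (Δ 1)) := by
      rw [← hco 1, LinearEquiv.symm_apply_apply]
    rw [this, hw7, iv (Δ 1)]
  exact chain.symm


/-- `K4((a⊗b)⊗(c⊗d)) = ε(b c) • (a ⊗ d)` -/
def K4 : (H ⊗[k] H) ⊗[k] (H ⊗[k] H) →ₗ[k] H ⊗[k] H :=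
  (TensorProduct.lid k (H ⊗[k] H)).toLinearMap
    ∘ₗ LinearMap.rTensor (H ⊗[k] H) (ε ∘ₗ LinearMap.mul' k H)
    ∘ₗ (TensorProduct.tensorTensorTensorComm k H H H H).toLinearMap
    ∘ₗ LinearMap.rTensor (H ⊗[k] H) (TensorProduct.comm k H H).toLinearMap

@[simp] lemma K4_tmul (a b c d : H) :
    K4 ε ((a ⊗ₜ[k] b) ⊗ₜ[k] (c ⊗ₜ[k] d)) = ε (b * c) • (a ⊗ₜ[k] d) := by
  simp [K4]

/-- `Theta(U ⊗ V) = (ε ⊗ id)(U * V)` -/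
def Theta : (H ⊗[k] H) ⊗[k] (H ⊗[k] H) →ₗ[k] H :=
  (TensorProduct.lid k H).toLinearMap ∘ₗ LinearMap.rTensor H ε ∘ₗ LinearMap.mul' k (H ⊗[k] H)

/-- `Psi2((a ⊗ (b⊗c)) ⊗ (x⊗y)) = a ⊗ (ε(b x) • (c y))` -/
def Psi2 : (H ⊗[k] (H ⊗[k] H)) ⊗[k] (H ⊗[k] H) →ₗ[k] H ⊗[k] H :=
  LinearMap.lTensor H (Theta ε)
    ∘ₗ (TensorProduct.assoc k H (H ⊗[k] H) (H ⊗[k] H)).toLinearMap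

lemma L26 (hmul : ∀ x y : H, Δ (x * y) = Δ x * Δ y)
    (hcl : ∀ h : H, (TensorProduct.lid k H) ((LinearMap.rTensor H ε) (Δ h)) = h)
    (hw7 : (LinearMap.lTensor H Δ) (Δ 1) =
      (TensorProduct.assoc k H H H) ((Δ 1) ⊗ₜ[k] (1 : H)) * ((1 : H) ⊗ₜ[k] (Δ 1)))
    (h : H) :
    K4 ε ((Δ 1) ⊗ₜ[k] (Δ h)) = Δ 1 * ((1:H) ⊗ₜ[k] h) := by
  have stepb : ∀ u v w : H ⊗[k] H,
      K4 ε (u ⊗ₜ[k] (v * w)) =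
      Psi2 ε (((TensorProduct.assoc k H H H) (u ⊗ₜ[k] (1:H)) * ((1:H) ⊗ₜ[k] v)) ⊗ₜ[k] w) := by
    intro u v w
    induction u using TensorProduct.induction_on with
    | zero => simp only [zero_mul, mul_zero, zero_tmul, tmul_zero, map_zero, LinearEquiv.map_zero]
    | tmul a b =>
      induction v using TensorProduct.induction_on with
      | zero => simp only [zero_mul, mul_zero, zero_tmul, tmul_zero, map_zero, LinearEquiv.map_zero]
      | tmul c d =>
        induction w using TensorProduct.induction_on with
        | zero => simp only [zero_mul, mul_zero, zero_tmul, tmul_zero, map_zero, LinearEquiv.map_zero]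
        | tmul X Y =>
          rw [TensorProduct.assoc_tmul]
          simp only [Algebra.TensorProduct.tmul_mul_tmul, mul_one, one_mul]
          simp [Psi2, Theta, TensorProduct.assoc_tmul, mul_assoc]
        | add x y hx hy =>
          simp only [add_mul, mul_add, add_tmul, tmul_add, map_add, LinearEquiv.map_add, hx, hy]
      | add x y hx hy =>
        simp only [add_mul, mul_add, add_tmul, tmul_add, map_add, LinearEquiv.map_add, hx, hy]
    | add x y hx hy =>
      simp only [add_mul, mul_add, add_tmul, tmul_add, map_add, LinearEquiv.map_add, hx, hy]
  have stepd : ∀ u : H ⊗[k] H,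
      Psi2 ε ((LinearMap.lTensor H Δ u) ⊗ₜ[k] (Δ h)) = u * ((1:H) ⊗ₜ[k] h) := by
    intro u
    induction u using TensorProduct.induction_on with
    | zero => simp
    | tmul a b =>
      rw [LinearMap.lTensor_tmul]
      have : Psi2 ε ((a ⊗ₜ[k] (Δ b)) ⊗ₜ[k] (Δ h)) = a ⊗ₜ[k] (Theta ε ((Δ b) ⊗ₜ[k] (Δ h))) := by
        simp [Psi2, TensorProduct.assoc_tmul]
      rw [this]
      have : Theta ε ((Δ b) ⊗ₜ[k] (Δ h)) = b * h := by
        simp only [Theta, LinearMap.comp_apply, LinearMap.mul'_apply, ← hmul]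
        exact hcl (b * h)
      rw [this, Algebra.TensorProduct.tmul_mul_tmul, mul_one]
    | add x y hx hy => rw [map_add, add_tmul, map_add, hx, hy, add_mul]
  have start : K4 ε ((Δ 1) ⊗ₜ[k] (Δ h)) = K4 ε ((Δ 1) ⊗ₜ[k] (Δ 1 * Δ h)) := by
    rw [hm1 Δ hmul]
  rw [start, stepb, ← hw7, stepd]


lemma M4 (v : H ⊗[k] H) (h : H) :
    LinearMap.rTensor H S (v * ((1:H) ⊗ₜ[k] h)) =
      LinearMap.rTensor H S v * ((1:H) ⊗ₜ[k] h) := by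
  induction v using TensorProduct.induction_on with
  | zero => simp
  | tmul a b => simp [Algebra.TensorProduct.tmul_mul_tmul]
  | add x y hx hy => simp [add_mul, hx, hy]

lemma K4S (u v : H ⊗[k] H) :
    K4 ε ((LinearMap.rTensor H S u) ⊗ₜ[k] v) = LinearMap.rTensor H S (K4 ε (u ⊗ₜ[k] v)) := by
  induction u using TensorProduct.induction_on with
  | zero => simp
  | tmul a b =>
    induction v using TensorProduct.induction_on with
    | zero => simp
    | tmul c d => simp
    | add x y hx hy => simp only [tmul_add, map_add, hx, hy]
  | add x y hx hy => simp only [map_add, add_tmul, hx, hy]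

lemma cmain (hmul : ∀ x y : H, Δ (x * y) = Δ x * Δ y)
    (hco : ∀ h : H, (TensorProduct.assoc k H H H) ((LinearMap.rTensor H Δ) (Δ h)) =
      (LinearMap.lTensor H Δ) (Δ h))
    (hcl : ∀ h : H, (TensorProduct.lid k H) ((LinearMap.rTensor H ε) (Δ h)) = h)
    (hcr : ∀ h : H, (TensorProduct.rid k H) ((LinearMap.lTensor H ε) (Δ h)) = h)
    (hwc1 : ∀ x y z : H, ε (x * y * z) = DK.eps2 k H ε x z (Δ y))
    (hwc2 : ∀ x y z : H, ε (x * y * z) = DK.eps2' k H ε x z (Δ y))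
    (hw7 : (LinearMap.lTensor H Δ) (Δ 1) =
      (TensorProduct.assoc k H H H) ((Δ 1) ⊗ₜ[k] (1 : H)) * ((1 : H) ⊗ₜ[k] (Δ 1)))
    (hw8 : (LinearMap.lTensor H Δ) (Δ 1) =
      ((1 : H) ⊗ₜ[k] (Δ 1)) * (TensorProduct.assoc k H H H) ((Δ 1) ⊗ₜ[k] (1 : H)))
    (hA1 : ∀ h : H, LinearMap.mul' k H ((LinearMap.lTensor H S) (Δ h)) = DK.PiL k H Δ ε h)
    (hA2 : ∀ h : H, LinearMap.mul' k H ((LinearMap.rTensor H S) (Δ h)) = DK.PiR k H Δ ε h)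
    (hA3 : ∀ h : H,
      (LinearMap.mul' k H ∘ₗ LinearMap.lTensor H (LinearMap.mul' k H))
        ((TensorProduct.map S (TensorProduct.map LinearMap.id S))
          ((LinearMap.lTensor H Δ) (Δ h))) = S h)
    (h : H) :
    LinearMap.rTensor H (DK.PiL k H Δ ε) (Δ h) =
      (LinearMap.rTensor H S (Δ 1)) * ((1:H) ⊗ₜ[k] h) := by
  set F : (H ⊗[k] H) ⊗[k] H →ₗ[k] H :=
    DK.PiL k H Δ ε ∘ₗ (TensorProduct.rid k H).toLinearMap
      ∘ₗ LinearMap.lTensor H (ε ∘ₗ LinearMap.mul' k H)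
      ∘ₗ (TensorProduct.assoc k H H H).toLinearMap with hFdef
  have F_tmul : ∀ (p q X : H), F ((p ⊗ₜ[k] q) ⊗ₜ[k] X) = ε (q * X) • DK.PiL k H Δ ε p := by
    intro p q X
    simp [hFdef, TensorProduct.assoc_tmul]
  -- cSplit : F (Δ c ⊗ X) = PiL (c * X)
  have cSplit : ∀ (c X : H), F ((Δ c) ⊗ₜ[k] X) = DK.PiL k H Δ ε (c * X) := by
    intro c X
    have e1 : ∀ V : H ⊗[k] H, F (V ⊗ₜ[k] X) =
        DK.PiL k H Δ ε ((TensorProduct.rid k H)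
          (LinearMap.lTensor H (ε ∘ₗ LinearMap.mulRight k X) V)) := by
      intro V
      induction V using TensorProduct.induction_on with
      | zero => simp
      | tmul p q => simp [F_tmul]
      | add x y hx hy => simp only [add_tmul, map_add, hx, hy]
    rw [e1]
    have e2 : ∀ u : H ⊗[k] H,
        DK.coPi k H H ε u ((TensorProduct.rid k H)
          (LinearMap.lTensor H (ε ∘ₗ LinearMap.mulRight k X) (Δ c))) =
        DK.coPi k H H ε u (c * X) := by
      intro u
      induction u using TensorProduct.induction_on with
      | zero => simp
      | tmul a b =>
        rw [coPi_tmul, coPi_tmul]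
        congr 1
        have e3 : ∀ V : H ⊗[k] H,
            ε (a * (TensorProduct.rid k H)
              (LinearMap.lTensor H (ε ∘ₗ LinearMap.mulRight k X) V)) =
            DK.eps2 k H ε a X V := by
          intro V
          induction V using TensorProduct.induction_on with
          | zero => simp
          | tmul p q => simp [mul_smul_comm, mul_comm]
          | add x y hx hy => simp only [map_add, mul_add, hx, hy]
        rw [e3 (Δ c), ← hwc1 a c X, mul_assoc]
      | add x y hx hy => simp only [coPi_add, hx, hy]
    exact e2 (Δ 1)
  -- step2 : rTensor PiL (u * w) in terms of F
  have sub2 : ∀ (V : H ⊗[k] H) (d X Y : H),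
      TensorProduct.map F (LinearMap.mul' k H)
        ((TensorProduct.tensorTensorTensorComm k (H ⊗[k] H) H H H)
          ((V ⊗ₜ[k] d) ⊗ₜ[k] (X ⊗ₜ[k] Y))) = F (V ⊗ₜ[k] X) ⊗ₜ[k] (d * Y) := by
    intro V d X Y
    induction V using TensorProduct.induction_on with
    | zero => simp
    | tmul p q => simp [TensorProduct.tensorTensorTensorComm_tmul]
    | add x y hx hy => simp only [add_tmul, map_add, LinearEquiv.map_add, hx, hy]
  have step2 : ∀ (u w : H ⊗[k] H),
      LinearMap.rTensor H (DK.PiL k H Δ ε) (u * w) =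
      TensorProduct.map F (LinearMap.mul' k H)
        ((TensorProduct.tensorTensorTensorComm k (H ⊗[k] H) H H H)
          ((LinearMap.rTensor H Δ u) ⊗ₜ[k] w)) := by
    intro u w
    induction u using TensorProduct.induction_on with
    | zero => simp only [zero_mul, map_zero, zero_tmul, LinearEquiv.map_zero]
    | tmul c d =>
      induction w using TensorProduct.induction_on with
      | zero => simp only [mul_zero, map_zero, tmul_zero, LinearEquiv.map_zero]
      | tmul X Y =>
        rw [LinearMap.rTensor_tmul, sub2, cSplit c X,
          Algebra.TensorProduct.tmul_mul_tmul, LinearMap.rTensor_tmul]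
      | add x y hx hy =>
        simp only [mul_add, tmul_add, map_add, LinearEquiv.map_add, hx, hy]
    | add x y hx hy =>
      simp only [add_mul, add_tmul, map_add, LinearEquiv.map_add, hx, hy]
  -- cFin
  have cFin : ∀ (u v w : H ⊗[k] H),
      TensorProduct.map F (LinearMap.mul' k H)
        ((TensorProduct.tensorTensorTensorComm k (H ⊗[k] H) H H H)
          (((TensorProduct.assoc k H H H).symm
            ((TensorProduct.assoc k H H H) (u ⊗ₜ[k] (1:H)) * ((1:H) ⊗ₜ[k] v))) ⊗ₜ[k] w)) =
      K4 ε ((LinearMap.rTensor H (DK.PiL k H Δ ε) u) ⊗ₜ[k] (v * w)) := by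
    intro u v w
    induction u using TensorProduct.induction_on with
    | zero => simp only [zero_tmul, map_zero, LinearEquiv.map_zero, zero_mul, tmul_zero]
    | tmul a b =>
      induction v using TensorProduct.induction_on with
      | zero => simp only [tmul_zero, map_zero, LinearEquiv.map_zero, mul_zero, zero_mul,
          zero_tmul, tmul_zero]
      | tmul p q =>
        induction w using TensorProduct.induction_on with
        | zero => simp only [tmul_zero, map_zero, LinearEquiv.map_zero, mul_zero]
        | tmul X Y =>
          rw [TensorProduct.assoc_tmul]
          simp only [Algebra.TensorProduct.tmul_mul_tmul, mul_one, one_mul]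
          rw [TensorProduct.assoc_symm_tmul]
          rw [TensorProduct.tensorTensorTensorComm_tmul, TensorProduct.map_tmul,
            LinearMap.rTensor_tmul, K4_tmul, F_tmul, LinearMap.mul'_apply]
          rw [smul_tmul', ← mul_assoc]
        | add x y hx hy =>
          simp only [add_mul, mul_add, add_tmul, tmul_add, map_add, LinearEquiv.map_add, hx, hy]
      | add x y hx hy =>
        simp only [add_mul, mul_add, add_tmul, tmul_add, map_add, LinearEquiv.map_add, hx, hy]
    | add x y hx hy =>
      simp only [add_mul, mul_add, add_tmul, tmul_add, map_add, LinearEquiv.map_add, hx, hy]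
  -- main chain
  calc LinearMap.rTensor H (DK.PiL k H Δ ε) (Δ h)
      = LinearMap.rTensor H (DK.PiL k H Δ ε) (Δ 1 * Δ h) := by rw [hm1 Δ hmul]
    _ = TensorProduct.map F (LinearMap.mul' k H)
        ((TensorProduct.tensorTensorTensorComm k (H ⊗[k] H) H H H)
          ((LinearMap.rTensor H Δ (Δ 1)) ⊗ₜ[k] (Δ h))) := step2 (Δ 1) (Δ h)
    _ = TensorProduct.map F (LinearMap.mul' k H)
        ((TensorProduct.tensorTensorTensorComm k (H ⊗[k] H) H H H)
          (((TensorProduct.assoc k H H H).symm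
            ((TensorProduct.assoc k H H H) ((Δ 1) ⊗ₜ[k] (1:H)) * ((1:H) ⊗ₜ[k] (Δ 1)))) ⊗ₜ[k] (Δ h))) := by
        rw [← hw7, ← hco 1, LinearEquiv.symm_apply_apply]
    _ = K4 ε ((LinearMap.rTensor H (DK.PiL k H Δ ε) (Δ 1)) ⊗ₜ[k] (Δ 1 * Δ h)) :=
        cFin (Δ 1) (Δ 1) (Δ h)
    _ = K4 ε ((LinearMap.rTensor H S (Δ 1)) ⊗ₜ[k] (Δ h)) := by
        rw [hm1 Δ hmul, c1 Δ ε S hmul hco hcl hcr hwc2 hw7 hw8 hA1 hA2 hA3]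
    _ = LinearMap.rTensor H S (K4 ε ((Δ 1) ⊗ₜ[k] (Δ h))) := K4S ε S (Δ 1) (Δ h)
    _ = LinearMap.rTensor H S (Δ 1 * ((1:H) ⊗ₜ[k] h)) := by
        rw [L26 Δ ε hmul hcl hw7 h]
    _ = (LinearMap.rTensor H S (Δ 1)) * ((1:H) ⊗ₜ[k] h) := M4 S (Δ 1) h

end WH
end Aux


/-- For a weak Hopf algebra `H` with antipode `S` and `R = Im Π^L`,
the element `e = S(1₍₁₎) ⊗ 1₍₂₎` is a separability idempotent for `R`:
`Π^L(g) S(1₍₁₎) ⊗ 1₍₂₎ = S(1₍₁₎) ⊗ 1₍₂₎ Π^L(g)` for all `g ∈ H`; moreover `R` is a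
subalgebra of `H` (it contains `1` and is closed under multiplication; it is an
`R`-submodule, being the range of a linear map). -/
theorem stmt5 (k : Type*) [CommRing k] (H : Type*) [Ring H] [Algebra k H]
    (Δ : H →ₗ[k] H ⊗[k] H) (ε : H →ₗ[k] k) (S : H →ₗ[k] H)
    (hwh : DK.IsWeakHopf k H Δ ε S) :
    (∀ g : H,
      (LinearMap.rTensor H (LinearMap.mulLeft k (DK.PiL k H Δ ε g)))
          ((LinearMap.rTensor H S) (Δ 1)) =
        (LinearMap.lTensor H (LinearMap.mulRight k (DK.PiL k H Δ ε g)))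
          ((LinearMap.rTensor H S) (Δ 1))) ∧
    (1 : H) ∈ Set.range (DK.PiL k H Δ ε) ∧
    (∀ x y : H, x ∈ Set.range (DK.PiL k H Δ ε) → y ∈ Set.range (DK.PiL k H Δ ε) →
      x * y ∈ Set.range (DK.PiL k H Δ ε)) := by
  obtain ⟨⟨hmul, hco, hcl, hcr, hwc1, hwc2, hw7, hw8⟩, hA1, hA2, hA3⟩ := hwh
  refine ⟨?_, ⟨1, WH.PiL_one Δ ε hcl⟩, ?_⟩
  · intro g
    set x := DK.PiL k H Δ ε g with hx
    have e1 : ∀ u : H ⊗[k] H,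
        LinearMap.rTensor H (LinearMap.mulLeft k x) u = (x ⊗ₜ[k] (1:H)) * u := by
      intro u
      induction u using TensorProduct.induction_on with
      | zero => simp
      | tmul a b => simp [Algebra.TensorProduct.tmul_mul_tmul]
      | add p q hp hq => simp only [map_add, mul_add, hp, hq]
    have e2 : ∀ u : H ⊗[k] H,
        LinearMap.lTensor H (LinearMap.mulRight k x) u = u * ((1:H) ⊗ₜ[k] x) := by
      intro u
      induction u using TensorProduct.induction_on with
      | zero => simp
      | tmul a b => simp [Algebra.TensorProduct.tmul_mul_tmul]
      | add p q hp hq => simp only [map_add, add_mul, hp, hq]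
    rw [e1, e2]
    have M3 : ∀ u : H ⊗[k] H,
        LinearMap.rTensor H (DK.PiL k H Δ ε) ((x ⊗ₜ[k] (1:H)) * u) =
          (x ⊗ₜ[k] (1:H)) * LinearMap.rTensor H (DK.PiL k H Δ ε) u := by
      intro u
      induction u using TensorProduct.induction_on with
      | zero => simp
      | tmul a b =>
        simp only [Algebra.TensorProduct.tmul_mul_tmul, LinearMap.rTensor_tmul, one_mul, hx]
        rw [WH.L11 Δ ε S hmul hw7 hA1 g a]
      | add p q hp hq => simp only [map_add, mul_add, hp, hq]
    calc (x ⊗ₜ[k] (1:H)) * LinearMap.rTensor H S (Δ 1)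
        = (x ⊗ₜ[k] (1:H)) * LinearMap.rTensor H (DK.PiL k H Δ ε) (Δ 1) := by
          rw [WH.c1 Δ ε S hmul hco hcl hcr hwc2 hw7 hw8 hA1 hA2 hA3]
      _ = LinearMap.rTensor H (DK.PiL k H Δ ε) ((x ⊗ₜ[k] (1:H)) * Δ 1) := (M3 (Δ 1)).symm
      _ = LinearMap.rTensor H (DK.PiL k H Δ ε) (Δ x) := by rw [← WH.L3a Δ ε hw7 g]
      _ = LinearMap.rTensor H S (Δ 1) * ((1:H) ⊗ₜ[k] x) :=
          WH.cmain Δ ε S hmul hco hcl hcr hwc1 hwc2 hw7 hw8 hA1 hA2 hA3 x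
  · rintro x y ⟨g, rfl⟩ ⟨h, rfl⟩
    exact ⟨DK.PiL k H Δ ε g * h, WH.L11 Δ ε S hmul hw7 hA1 g h⟩
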